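/- Let E_h, E_x, H be finite-dimensional real inner product spaces, f : E_h × E_x × H → E_h a C¹ transition map, x₁, …, x_L ∈ E_x inputs, and θ ∈ H. Write fₖ(h) = f(h, xₖ, θ), define head maps αₖ(h, θ) by α₀(h, θ) = h and αₖ(h, θ) = f(α_{k−1}(h, θ), xₖ, θ), write hⱼ = αⱼ(h, θ), and let μ_{k,i} = f_k ∘ ⋯ ∘ fᵢ (identity for k < i). Then for any k ∈ {1, …, L} and h ∈ E_h, the derivative of αₖ with respect to the shared parameter θ satisfies ∇_θ αₖ(h, θ) = Σ_{j=1}^{k} Dμ_{k,j+1}(hⱼ) ∘ ∇_θ f(h_{j−1}, xⱼ, θ). -/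

import Mathlib

/-- The RNN head map: `headMap f x 0 h θ = h` and
`headMap f x (i+1) h θ = f (headMap f x i h θ, x (i + 1), θ)`, i.e. `αᵢ(h, θ)`. -/
def headMap {Eh Ex H : Type*} (f : Eh × Ex × H → Eh) (x : ℕ → Ex) :
    ℕ → Eh → H → Eh
  | 0, h, _ => h
  | i + 1, h, θ => f (headMap f x i h θ, x (i + 1), θ)

/-- `muChain f i j = μ_{j,i} = f_j ∘ ⋯ ∘ f_i` for `i ≤ j`, and the identity for `j < i`
(indices are 1-based: `muChain f i 0 = id`). -/
def muChain {E : Type*} (f : ℕ → E → E) (i : ℕ) : ℕ → E → E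
  | 0 => id
  | j + 1 => if j + 1 < i then id else f (j + 1) ∘ muChain f i j

section Aux

variable {Eh Ex H : Type*}
  [NormedAddCommGroup Eh] [NormedSpace ℝ Eh]
  [NormedAddCommGroup Ex] [NormedSpace ℝ Ex]
  [NormedAddCommGroup H] [NormedSpace ℝ H]

lemma headMap_diff (f : Eh × Ex × H → Eh) (hf : Differentiable ℝ f) (x : ℕ → Ex) (h : Eh) :
    ∀ k, Differentiable ℝ (fun θ' => headMap f x k h θ')
  | 0 => by simpa [headMap] using differentiable_const h
  | (k+1) => by
      have ih := headMap_diff f hf x h k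
      simp only [headMap]
      exact hf.comp (ih.prodMk ((differentiable_const _).prodMk differentiable_id))

lemma muChain_diff {E : Type*} [NormedAddCommGroup E] [NormedSpace ℝ E]
    (g : ℕ → E → E) (hg : ∀ m, Differentiable ℝ (g m)) (i : ℕ) :
    ∀ j, Differentiable ℝ (muChain g i j)
  | 0 => differentiable_id
  | (j+1) => by
      unfold muChain
      split
      · exact differentiable_id
      · exact (hg _).comp (muChain_diff g hg i j)

lemma muChain_headMap (f : Eh × Ex × H → Eh) (x : ℕ → Ex) (θ : H) (h : Eh) :
    ∀ k j, j ≤ k → muChain (fun m h' => f (h', x m, θ)) (j+1) k (headMap f x j h θ)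
      = headMap f x k h θ
  | 0, j, hj => by
      interval_cases j
      simp [muChain, headMap]
  | (k+1), j, hj => by
      rcases Nat.lt_or_ge j (k+1) with hlt | hge
      · have hjk : j ≤ k := Nat.lt_succ_iff.mp hlt
        have hnot : ¬ (k + 1 < j + 1) := by omega
        simp only [muChain, hnot, if_false, Function.comp_apply]
        rw [muChain_headMap f x θ h k j hjk]
        rfl
      · have hj' : j = k+1 := le_antisymm hj hge
        subst hj'
        simp [muChain]

end Aux

/-- expansion of the parameter derivative of the head map.
With transition `fₖ(h) = f(h, xₖ, θ)` (parameter `θ` shared across layers), head maps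
`αₖ`, hidden states `hⱼ = αⱼ(h,θ)` and `μ_{k,i} = f_k ∘ ⋯ ∘ f_i`, for `1 ≤ k ≤ L`:
`∇_θ αₖ(h,θ) = Σ_{j=1}^{k} Dμ_{k,j+1}(hⱼ) ∘ ∇_θ f(h_{j−1}, xⱼ, θ)`. -/
theorem stmt_15
    {Eh Ex H : Type*}
    [NormedAddCommGroup Eh] [InnerProductSpace ℝ Eh] [FiniteDimensional ℝ Eh]
    [NormedAddCommGroup Ex] [InnerProductSpace ℝ Ex] [FiniteDimensional ℝ Ex]
    [NormedAddCommGroup H] [InnerProductSpace ℝ H] [FiniteDimensional ℝ H]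
    (f : Eh × Ex × H → Eh) (hf : ContDiff ℝ 1 f)
    (L : ℕ) (x : ℕ → Ex) (θ : H) (h : Eh)
    (k : ℕ) (hk1 : 1 ≤ k) (hkL : k ≤ L) :
    fderiv ℝ (fun θ' => headMap f x k h θ') θ =
      ∑ j ∈ Finset.Icc 1 k,
        (fderiv ℝ (muChain (fun m h' => f (h', x m, θ)) (j + 1) k)
            (headMap f x j h θ)).comp
          (fderiv ℝ (fun θ' => f (headMap f x (j - 1) h θ, x j, θ')) θ) := by
  clear hkL
  have hdf : Differentiable ℝ f := hf.differentiable one_ne_zero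
  set g : ℕ → Eh → Eh := fun m h' => f (h', x m, θ) with hg_def
  have hg : ∀ m, Differentiable ℝ (g m) := fun m =>
    hdf.comp (differentiable_id.prodMk (differentiable_const _))
  induction k, hk1 using Nat.le_induction with
  | base =>
      simp only [Finset.Icc_self, Finset.sum_singleton]
      have : muChain g 2 1 = id := by
        simp [muChain]
      rw [this]
      have h1 : (fun θ' => headMap f x 1 h θ') = fun θ' => f (h, x 1, θ') := by
        funext θ'; rfl
      rw [h1]
      simp [headMap, fderiv_id]
  | succ k hk ih =>
      -- notation
      set α : ℕ → H → Eh := fun j θ' => headMap f x j h θ' with hα_def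
      have hαd : ∀ j, Differentiable ℝ (α j) := fun j => headMap_diff f hdf x h j
      set p : Eh × Ex × H := (α k θ, x (k+1), θ) with hp_def
      set Df := fderiv ℝ f p with hDf_def
      set A := fderiv ℝ (α k) θ with hA_def
      have hfp : HasFDerivAt f Df p := (hdf p).hasFDerivAt
      -- derivative of θ' ↦ (α k θ', x (k+1), θ')
      have hφ : HasFDerivAt (fun θ' => (α k θ', x (k+1), θ'))
          (A.prod ((0 : H →L[ℝ] Ex).prod (ContinuousLinearMap.id ℝ H))) θ :=
        HasFDerivAt.prodMk ((hαd k θ).hasFDerivAt) (HasFDerivAt.prodMk (hasFDerivAt_const _ _) (hasFDerivAt_id θ))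
      have hLHS : HasFDerivAt (α (k+1))
          (Df.comp (A.prod ((0 : H →L[ℝ] Ex).prod (ContinuousLinearMap.id ℝ H)))) θ := by
        have : α (k+1) = fun θ' => f (α k θ', x (k+1), θ') := by funext θ'; rfl
        rw [this]
        exact hfp.comp θ hφ
      -- B = D(g (k+1)) at α k θ
      set B := fderiv ℝ (g (k+1)) (α k θ) with hB_def
      have hB : B = Df.comp ((ContinuousLinearMap.id ℝ Eh).prod (0 : Eh →L[ℝ] Ex × H)) := by
        have hψ : HasFDerivAt (fun h' : Eh => (h', x (k+1), θ))
            ((ContinuousLinearMap.id ℝ Eh).prod (0 : Eh →L[ℝ] Ex × H)) (α k θ) :=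
          HasFDerivAt.prodMk (hasFDerivAt_id _) (hasFDerivAt_const _ _)
        exact (hfp.comp (α k θ) hψ).fderiv
      -- C = ∂θ f (α k θ, x (k+1), θ)
      set C := fderiv ℝ (fun θ' => f (α k θ, x (k+1), θ')) θ with hC_def
      have hC : C = Df.comp ((0 : H →L[ℝ] Eh).prod
          ((0 : H →L[ℝ] Ex).prod (ContinuousLinearMap.id ℝ H))) := by
        have hχ : HasFDerivAt (fun θ' : H => (α k θ, x (k+1), θ'))
            ((0 : H →L[ℝ] Eh).prod ((0 : H →L[ℝ] Ex).prod (ContinuousLinearMap.id ℝ H))) θ :=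
          HasFDerivAt.prodMk (hasFDerivAt_const _ _) (HasFDerivAt.prodMk (hasFDerivAt_const _ _) (hasFDerivAt_id θ))
        exact (hfp.comp θ hχ).fderiv
      have hsplit : Df.comp (A.prod ((0 : H →L[ℝ] Ex).prod (ContinuousLinearMap.id ℝ H)))
          = B.comp A + C := by
        rw [hB, hC]
        ext v
        simp only [ContinuousLinearMap.comp_apply, ContinuousLinearMap.prod_apply,
          ContinuousLinearMap.id_apply, ContinuousLinearMap.zero_apply,
          ContinuousLinearMap.add_apply]
        rw [← map_add]
        simp [Prod.mk_add_mk]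
      -- rewrite sum over Icc 1 (k+1)
      rw [hLHS.fderiv, hsplit]
      rw [Finset.sum_Icc_succ_top (by omega : 1 ≤ k + 1)]
      -- last term is C
      have hlast : muChain g (k+1+1) (k+1) = id := by
        simp [muChain]
      have hlastterm :
          (fderiv ℝ (muChain g (k+1+1) (k+1)) (α (k+1) θ)).comp
            (fderiv ℝ (fun θ' => f (α (k+1-1) θ, x (k+1), θ')) θ) = C := by
        rw [hlast]
        simp only [Nat.add_sub_cancel, fderiv_id]
        rw [ContinuousLinearMap.id_comp]
      -- main sum terms
      have hterm : ∀ j ∈ Finset.Icc 1 k,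
          (fderiv ℝ (muChain g (j+1) (k+1)) (α j θ)).comp
            (fderiv ℝ (fun θ' => f (α (j-1) θ, x j, θ')) θ)
          = B.comp ((fderiv ℝ (muChain g (j+1) k) (α j θ)).comp
            (fderiv ℝ (fun θ' => f (α (j-1) θ, x j, θ')) θ)) := by
        intro j hj
        obtain ⟨hj1, hjk⟩ := Finset.mem_Icc.mp hj
        have hnot : ¬ (k + 1 < j + 1) := by omega
        have hmu : muChain g (j+1) (k+1) = g (k+1) ∘ muChain g (j+1) k := by
          simp only [muChain, hnot, if_false]
        have hchain : fderiv ℝ (muChain g (j+1) (k+1)) (α j θ)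
            = B.comp (fderiv ℝ (muChain g (j+1) k) (α j θ)) := by
          rw [hmu, fderiv_comp _ (hg (k+1) _) (muChain_diff g hg (j+1) k _)]
          rw [muChain_headMap f x θ h k j hjk]
        rw [hchain, ContinuousLinearMap.comp_assoc]
      rw [Finset.sum_congr rfl hterm, hlastterm, ih]
      congr 1
      ext v
      simp [ContinuousLinearMap.sum_apply]
      rfl
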